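/- Let $(g_k)_{k \in K^+}$ be a finite family of vectors indexed by a finite set $K^+ \subseteq \mathbb{N}$, let $\varsigma > 0$, $0 < \theta_{\min} \le \theta_k$ for each $k$, and define $\mu_k = \theta_k \sqrt{\varsigma + \sum_{j \in K^+, j \le k} \|g_j\|^2}$. Then $\sum_{k \in K^+} \frac{\|g_k\|^2}{\mu_k^2} \le \frac{1}{\theta_{\min}^2}\left(\ln\left(\varsigma + \sum_{k \in K^+}\|g_k\|^2\right) - \ln \varsigma\right)$. -/

import Mathlib

open Finset

lemma frac_le_log_aux (c d : ℝ) (hc : 0 < c) (hd : 0 ≤ d) :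
    d / (c + d) ≤ Real.log (c + d) - Real.log c := by
  have hcd : 0 < c + d := by linarith
  have h := Real.log_le_sub_one_of_pos (x := c / (c + d)) (by positivity)
  rw [Real.log_div hc.ne' hcd.ne'] at h
  have h2 : c / (c + d) - 1 = -(d / (c + d)) := by field_simp; ring
  rw [h2] at h
  linarith

lemma sum_frac_le_log (ς : ℝ) (hς : 0 < ς) (f : ℕ → ℝ) (hf : ∀ k, 0 ≤ f k)
    (K : Finset ℕ) :
    ∑ k ∈ K, f k / (ς + ∑ j ∈ K.filter (· ≤ k), f j) ≤
      Real.log (ς + ∑ k ∈ K, f k) - Real.log ς := by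
  induction K using Finset.induction_on_max with
  | empty => simp
  | insert a s hmax ih =>
    have ha : a ∉ s := fun h => lt_irrefl a (hmax a h)
    have h1 : (insert a s).filter (· ≤ a) = insert a s := by
      apply Finset.filter_true_of_mem
      intro x hx
      rcases Finset.mem_insert.mp hx with h | h
      · exact le_of_eq h
      · exact (hmax x h).le
    have h2 : ∀ k ∈ s, ∑ j ∈ (insert a s).filter (· ≤ k), f j
        = ∑ j ∈ s.filter (· ≤ k), f j := by
      intro k hk
      rw [Finset.filter_insert, if_neg (not_le.mpr (hmax k hk))]
    have h3 : ∑ k ∈ s, f k / (ς + ∑ j ∈ (insert a s).filter (· ≤ k), f j)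
        = ∑ k ∈ s, f k / (ς + ∑ j ∈ s.filter (· ≤ k), f j) :=
      Finset.sum_congr rfl (fun k hk => by rw [h2 k hk])
    rw [Finset.sum_insert ha, Finset.sum_insert ha, h1, Finset.sum_insert ha, h3]
    have hS' : 0 ≤ ∑ k ∈ s, f k := Finset.sum_nonneg fun k _ => hf k
    have key := frac_le_log_aux (ς + ∑ k ∈ s, f k) (f a) (by linarith) (hf a)
    have harr : ς + (f a + ∑ k ∈ s, f k) = (ς + ∑ k ∈ s, f k) + f a := by ring
    rw [harr]
    linarith

theorem stmt_8 (n : ℕ) (K : Finset ℕ) (g : ℕ → EuclideanSpace ℝ (Fin n))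
    (ς θmin : ℝ) (hς : 0 < ς) (hθ : 0 < θmin)
    (θ μ : ℕ → ℝ) (hθk : ∀ k ∈ K, θmin ≤ θ k)
    (hμ : ∀ k ∈ K, μ k = θ k * Real.sqrt (ς + ∑ j ∈ K.filter (· ≤ k), ‖g j‖ ^ 2)) :
    ∑ k ∈ K, ‖g k‖ ^ 2 / (μ k) ^ 2 ≤
      (1 / θmin ^ 2) * (Real.log (ς + ∑ k ∈ K, ‖g k‖ ^ 2) - Real.log ς) := by
  have hfnn : ∀ k, (0:ℝ) ≤ ‖g k‖ ^ 2 := fun k => sq_nonneg _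
  have main := sum_frac_le_log ς hς (fun k => ‖g k‖ ^ 2) hfnn K
  have step : ∑ k ∈ K, ‖g k‖ ^ 2 / (μ k) ^ 2 ≤
      (1 / θmin ^ 2) * ∑ k ∈ K, ‖g k‖ ^ 2 / (ς + ∑ j ∈ K.filter (· ≤ k), ‖g j‖ ^ 2) := by
    rw [Finset.mul_sum]
    apply Finset.sum_le_sum
    intro k hk
    have hP : 0 ≤ ∑ j ∈ K.filter (· ≤ k), ‖g j‖ ^ 2 :=
      Finset.sum_nonneg fun j _ => hfnn j
    have hden : 0 < ς + ∑ j ∈ K.filter (· ≤ k), ‖g j‖ ^ 2 := by linarith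
    have hθk' := hθk k hk
    rw [hμ k hk, mul_pow, Real.sq_sqrt hden.le]
    have heq : 1 / θmin ^ 2 * (‖g k‖ ^ 2 / (ς + ∑ j ∈ K.filter (· ≤ k), ‖g j‖ ^ 2))
        = ‖g k‖ ^ 2 / (θmin ^ 2 * (ς + ∑ j ∈ K.filter (· ≤ k), ‖g j‖ ^ 2)) := by
      field_simp
    rw [heq]
    apply div_le_div_of_nonneg_left (hfnn k) (by positivity)
    have : θmin ^ 2 ≤ θ k ^ 2 := by nlinarith
    nlinarith
  calc ∑ k ∈ K, ‖g k‖ ^ 2 / (μ k) ^ 2 ≤ _ := step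
    _ ≤ (1 / θmin ^ 2) * (Real.log (ς + ∑ k ∈ K, ‖g k‖ ^ 2) - Real.log ς) := by
        apply mul_le_mul_of_nonneg_left main (by positivity)
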